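/- arXiv:2310.01896 — 5 statements merged into one kernel-verified Lean document; each statement's English description precedes it below -/
import Mathlib

section
/- Let α, β > 0, let A be an n×n complex matrix with ‖A‖ < 1 (and A ≠ 0) for a submultiplicative matrix norm ‖·‖ induced by a vector norm, and let ε > 0. If m is a positive integer with m ≥ max{ ⌈(2−β)/α + 1⌉, ⌈ln(ε(1−‖A‖))/ln(‖A‖)⌉ + 1 }, then the Taylor truncation error satisfies R_m(A) := ‖E_{α,β}(A) − Σ_{k=0}^{m} A^k/Γ(αk+β)‖ ≤ ε. -/
open scoped Matrix

/-- The matrix Mittag-Leffler function `E_{α,β}(A) = ∑_{k=0}^∞ A^k / Γ(αk+β)`. -/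
noncomputable def ML {n : ℕ} (α β : ℝ) (A : Matrix (Fin n) (Fin n) ℂ) :
    Matrix (Fin n) (Fin n) ℂ :=
  ∑' k : ℕ, (Real.Gamma (α * k + β))⁻¹ • A ^ k

/-- Type synonym of matrices, to carry a custom norm. -/
def MatSyn (n : ℕ) := Matrix (Fin n) (Fin n) ℂ

instance {n : ℕ} : AddCommGroup (MatSyn n) :=
  inferInstanceAs (AddCommGroup (Matrix (Fin n) (Fin n) ℂ))

noncomputable instance {n : ℕ} : Module ℂ (MatSyn n) :=
  inferInstanceAs (Module ℂ (Matrix (Fin n) (Fin n) ℂ))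

instance {n : ℕ} : FiniteDimensional ℂ (MatSyn n) :=
  inferInstanceAs (Module.Finite ℂ (Matrix (Fin n) (Fin n) ℂ))

lemma one_le_Gamma_of_two_le {x : ℝ} (hx : 2 ≤ x) : 1 ≤ Real.Gamma x := by
  rcases eq_or_lt_of_le hx with h | h
  · rw [← h, Real.Gamma_two]
  · have := Real.Gamma_strictMonoOn_Ici (Set.self_mem_Ici) (le_of_lt h : (2:ℝ) ≤ x) h
    rw [Real.Gamma_two] at this
    exact this.le

lemma real_smul_matrix {n : ℕ} (r : ℝ) (M : Matrix (Fin n) (Fin n) ℂ) :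
    r • M = (r : ℂ) • M := by
  ext i j
  simp [Matrix.smul_apply, Complex.real_smul]

/-- Proposition 1: if `m ≥ max{⌈(2−β)/α + 1⌉, ⌈ln(ε(1−‖A‖))/ln ‖A‖⌉ + 1}`, then the
Taylor truncation error satisfies `R_m(A) ≤ ε`, for any submultiplicative matrix norm
induced by a vector norm (so `‖I‖ = 1`). -/
theorem taylor_truncation_error_le {n : ℕ} (α β ε : ℝ) (hα : 0 < α) (hβ : 0 < β)
    (hε : 0 < ε)
    (nrm : Matrix (Fin n) (Fin n) ℂ → ℝ)
    (hnrm_nonneg : ∀ A, 0 ≤ nrm A)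
    (hnrm_def : ∀ A, nrm A = 0 ↔ A = 0)
    (hnrm_add : ∀ A B, nrm (A + B) ≤ nrm A + nrm B)
    (hnrm_smul : ∀ (c : ℂ) A, nrm (c • A) = ‖c‖ * nrm A)
    (hnrm_mul : ∀ A B, nrm (A * B) ≤ nrm A * nrm B)
    (hnrm_one : nrm 1 = 1)
    (A : Matrix (Fin n) (Fin n) ℂ) (hA0 : A ≠ 0) (hA : nrm A < 1)
    (m : ℕ) (hm : 0 < m)
    (hge : max ⌈(2 - β) / α + 1⌉ (⌈Real.log (ε * (1 - nrm A)) / Real.log (nrm A)⌉ + 1)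
      ≤ (m : ℤ)) :
    nrm (ML α β A - ∑ k ∈ Finset.range (m + 1), (Real.Gamma (α * k + β))⁻¹ • A ^ k) ≤ ε := by
  set a := nrm A with ha_def
  have ha0 : 0 < a := lt_of_le_of_ne (hnrm_nonneg A)
    (fun h => hA0 ((hnrm_def A).1 h.symm))
  have h1a : 0 < 1 - a := by linarith
  -- transfer the norm to the type synonym
  letI : NormedAddCommGroup (MatSyn n) := AddGroupNorm.toNormedAddCommGroup
    { toFun := nrm
      map_zero' := (hnrm_def 0).2 rfl
      add_le' := hnrm_add
      neg' := fun x => by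
        have h := hnrm_smul (-1) x
        have h2 : nrm (-x) = nrm ((-1 : ℂ) • x) :=
          congrArg nrm (neg_one_smul ℂ (x : Matrix (Fin n) (Fin n) ℂ)).symm
        rw [h2]
        exact h.trans (by simp)
      eq_zero_of_map_eq_zero' := fun x hx => (hnrm_def x).1 hx }
  letI : NormedSpace ℂ (MatSyn n) :=
    ⟨fun c x => le_of_eq (hnrm_smul c x)⟩
  have hnorm_eq : ∀ x : MatSyn n, nrm x = ‖x‖ := fun _ => rfl
  -- identity linear equivalence
  let e : MatSyn n ≃ₗ[ℂ] Matrix (Fin n) (Fin n) ℂ :=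
    { toFun := fun x => x, invFun := fun x => x,
      map_add' := fun _ _ => rfl, map_smul' := fun _ _ => rfl,
      left_inv := fun _ => rfl, right_inv := fun _ => rfl }
  have hcont : Continuous e := e.toLinearMap.continuous_of_finiteDimensional
  -- the terms, viewed in the synonym
  set T : ℕ → MatSyn n :=
    fun k => ((Real.Gamma (α * k + β))⁻¹ • A ^ k : Matrix (Fin n) (Fin n) ℂ) with hT
  have hΓpos : ∀ k : ℕ, 0 < Real.Gamma (α * k + β) := fun k =>
    Real.Gamma_pos_of_pos (by positivity)
  have hpow : ∀ k : ℕ, nrm (A ^ k) ≤ a ^ k := by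
    intro k
    induction k with
    | zero => simpa using hnrm_one.le
    | succ k ih =>
      rw [pow_succ, pow_succ]
      calc nrm (A ^ k * A) ≤ nrm (A ^ k) * nrm A := hnrm_mul _ _
        _ ≤ a ^ k * a := by
          exact mul_le_mul ih le_rfl (hnrm_nonneg A) (by positivity)
  have hTnorm : ∀ k : ℕ, ‖T k‖ = (Real.Gamma (α * k + β))⁻¹ * nrm (A ^ k) := by
    intro k
    rw [← hnorm_eq]
    rw [hT]
    simp only
    rw [real_smul_matrix, hnrm_smul]
    congr 1
    rw [Complex.norm_real, Real.norm_eq_abs, abs_of_nonneg (inv_nonneg.mpr (hΓpos k).le)]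
  -- the first condition of `hge`
  have hge1 : (2 - β) / α + 1 ≤ (m : ℝ) := by
    have h := le_trans (le_max_left _ _) hge
    have := Int.ceil_le.mp h
    exact_mod_cast this
  have hαmβ : 2 ≤ α * ((m : ℝ) - 1) + β := by
    have : (2 - β) / α ≤ (m : ℝ) - 1 := by linarith
    have := (div_le_iff₀ hα).mp this
    linarith [this]
  have hΓone : ∀ k : ℕ, (m : ℝ) - 1 ≤ (k : ℝ) → 1 ≤ Real.Gamma (α * k + β) := by
    intro k hk
    apply one_le_Gamma_of_two_le
    have : α * ((m : ℝ) - 1) ≤ α * k := by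
      exact mul_le_mul_of_nonneg_left hk hα.le
    linarith
  -- termwise bound for the shifted series
  have hshift_bound : ∀ k : ℕ, ‖T (k + (m + 1))‖ ≤ a ^ (m + 1) * a ^ k := by
    intro k
    rw [hTnorm]
    have hk : (m : ℝ) - 1 ≤ ((k + (m + 1) : ℕ) : ℝ) := by
      push_cast; linarith [Nat.cast_nonneg (α := ℝ) k]
    have hΓ := hΓone _ hk
    calc (Real.Gamma (α * (k + (m + 1) : ℕ) + β))⁻¹ * nrm (A ^ (k + (m + 1)))
        ≤ 1 * a ^ (k + (m + 1)) := by
          apply mul_le_mul (inv_le_one_of_one_le₀ hΓ) (hpow _) (hnrm_nonneg _) zero_le_one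
      _ = a ^ (m + 1) * a ^ k := by rw [one_mul, pow_add, mul_comm]
  -- summability
  have hgeo : HasSum (fun k : ℕ => a ^ (m + 1) * a ^ k) (a ^ (m + 1) * (1 - a)⁻¹) :=
    (hasSum_geometric_of_lt_one ha0.le hA).mul_left _
  have hsum_shift : Summable (fun k => T (k + (m + 1))) :=
    Summable.of_norm_bounded hgeo.summable hshift_bound
  have hsum : Summable T := (summable_nat_add_iff (m + 1)).mp hsum_shift
  -- identify ML with the tsum in the synonym
  have hmap : HasSum (fun k : ℕ => (Real.Gamma (α * k + β))⁻¹ • A ^ k)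
      (e (∑' k, T k)) := by
    have h := hsum.hasSum.map e.toLinearMap.toAddMonoidHom hcont
    exact h
  have hML : ML α β A = e (∑' k, T k) := by
    rw [ML]
    exact hmap.tsum_eq
  -- rewrite the goal in the synonym
  have hgoal : nrm (ML α β A - ∑ k ∈ Finset.range (m + 1),
      (Real.Gamma (α * k + β))⁻¹ • A ^ k)
      = ‖(∑' k, T k) - ∑ k ∈ Finset.range (m + 1), T k‖ := by
    rw [hML]
    rfl
  rw [hgoal]
  have htail : (∑' k, T k) - ∑ k ∈ Finset.range (m + 1), T k
      = ∑' k, T (k + (m + 1)) :=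
    sub_eq_of_eq_add' (hsum.sum_add_tsum_nat_add (m + 1)).symm
  rw [htail]
  have hbound : ‖∑' k, T (k + (m + 1))‖ ≤ a ^ (m + 1) * (1 - a)⁻¹ :=
    tsum_of_norm_bounded hgeo hshift_bound
  refine hbound.trans ?_
  -- final scalar estimate
  have hloga : Real.log a < 0 := Real.log_neg ha0 hA
  have hge2 : Real.log (ε * (1 - a)) / Real.log a ≤ (m : ℝ) + 1 := by
    have h := le_trans (le_max_right _ _) hge
    have h' : ⌈Real.log (ε * (1 - a)) / Real.log a⌉ ≤ (m : ℤ) - 1 := by omega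
    have h'' := (Int.le_ceil _).trans (by exact_mod_cast h' :
      (⌈Real.log (ε * (1 - a)) / Real.log a⌉ : ℝ) ≤ (m : ℝ) - 1)
    linarith
  have hkey : a ^ (m + 1) ≤ ε * (1 - a) := by
    have hεa : 0 < ε * (1 - a) := by positivity
    rw [← Real.log_le_log_iff (by positivity) hεa, Real.log_pow]
    have : Real.log (ε * (1 - a)) = (Real.log (ε * (1 - a)) / Real.log a) * Real.log a :=
      (div_mul_cancel₀ _ (ne_of_lt hloga)).symm
    rw [this]
    have := mul_le_mul_of_nonpos_right hge2 hloga.le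
    calc ((m + 1 : ℕ) : ℝ) * Real.log a = ((m : ℝ) + 1) * Real.log a := by push_cast; ring
      _ ≤ (Real.log (ε * (1 - a)) / Real.log a) * Real.log a := this
  calc a ^ (m + 1) * (1 - a)⁻¹ ≤ (ε * (1 - a)) * (1 - a)⁻¹ := by
        exact mul_le_mul_of_nonneg_right hkey (by positivity)
    _ = ε := by field_simp
end

section
/- Let α, β > 0, let A be an n×n complex matrix with ‖A‖ < 1 for a submultiplicative matrix norm ‖·‖ induced by a vector norm, let μ > 0 and let m be a positive integer such that ‖A^{m+1}‖/Γ(α(m+1)+β) ≤ μ and α(m+1)+β ≥ 2. Then the Taylor truncation error satisfies R_m(A) := ‖E_{α,β}(A) − Σ_{k=0}^{m} A^k/Γ(αk+β)‖ ≤ μ/(1−‖A‖). -/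
open scoped Matrix

/-- A copy of the matrix space, used to endow it with a custom norm. -/
def MCopy (n : ℕ) : Type := Matrix (Fin n) (Fin n) ℂ

/-- Proposition 2: if `‖A‖ < 1`, `‖A^{m+1}‖ / Γ(α(m+1)+β) ≤ μ` and `α(m+1)+β ≥ 2`,
then the Taylor truncation error satisfies `R_m(A) ≤ μ/(1−‖A‖)`, for any
submultiplicative matrix norm induced by a vector norm. -/
theorem taylor_truncation_error_le_of_term_le {n : ℕ} (α β μ : ℝ)
    (hα : 0 < α) (hβ : 0 < β) (hμ : 0 < μ)
    (nrm : Matrix (Fin n) (Fin n) ℂ → ℝ)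
    (hnrm_nonneg : ∀ A, 0 ≤ nrm A)
    (hnrm_def : ∀ A, nrm A = 0 ↔ A = 0)
    (hnrm_add : ∀ A B, nrm (A + B) ≤ nrm A + nrm B)
    (hnrm_smul : ∀ (c : ℂ) A, nrm (c • A) = ‖c‖ * nrm A)
    (hnrm_mul : ∀ A B, nrm (A * B) ≤ nrm A * nrm B)
    (hnrm_one : nrm 1 = 1)
    (A : Matrix (Fin n) (Fin n) ℂ) (hA : nrm A < 1)
    (m : ℕ) (hm : 0 < m)
    (hAm : nrm (A ^ (m + 1)) / Real.Gamma (α * (m + 1) + β) ≤ μ)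
    (h2 : 2 ≤ α * (m + 1) + β) :
    nrm (ML α β A - ∑ k ∈ Finset.range (m + 1), (Real.Gamma (α * k + β))⁻¹ • A ^ k)
      ≤ μ / (1 - nrm A) := by
  classical
  have hr0 : (0 : ℝ) ≤ nrm A := hnrm_nonneg A
  have hΓpos : ∀ x : ℝ, 0 < x → 0 < Real.Gamma x := fun x hx => Real.Gamma_pos_of_pos hx
  have hΓk : ∀ k : ℕ, 0 < Real.Gamma (α * k + β) := by
    intro k
    apply hΓpos
    positivity
  -- submultiplicativity for powers
  have hpow : ∀ k : ℕ, nrm (A ^ k) ≤ nrm A ^ k := by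
    intro k
    induction k with
    | zero => simp [hnrm_one]
    | succ k ih =>
      calc nrm (A ^ (k + 1)) = nrm (A ^ k * A) := by rw [pow_succ]
        _ ≤ nrm (A ^ k) * nrm A := hnrm_mul _ _
        _ ≤ nrm A ^ k * nrm A := mul_le_mul_of_nonneg_right ih hr0
        _ = nrm A ^ (k + 1) := (pow_succ _ _).symm
  -- norm of a real scalar multiple
  have hnrm_rsmul : ∀ (c : ℝ) (X : Matrix (Fin n) (Fin n) ℂ),
      nrm (c • X) = |c| * nrm X := by
    intro c X
    have hX : c • X = (c : ℂ) • X := by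
      ext i j
      simp [Complex.real_smul]
    rw [hX, hnrm_smul, Complex.norm_real, Real.norm_eq_abs]
  set f : ℕ → Matrix (Fin n) (Fin n) ℂ :=
    fun k => (Real.Gamma (α * k + β))⁻¹ • A ^ k with hfdef
  -- the key term bound
  have hterm : ∀ j : ℕ, nrm (f (j + (m + 1))) ≤ μ * nrm A ^ j := by
    intro j
    have hcast : (α * ((j : ℝ) + (m + 1)) + β) = α * (↑(j + (m + 1)) : ℝ) + β := by
      push_cast; ring
    have hmem₁ : (α * (m + 1) + β) ∈ Set.Ici (2 : ℝ) := h2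
    have hle : α * (m + 1) + β ≤ α * (↑(j + (m + 1)) : ℝ) + β := by
      push_cast
      nlinarith [hα.le, (Nat.cast_nonneg j : (0:ℝ) ≤ (j:ℝ))]
    have hmem₂ : (α * (↑(j + (m + 1)) : ℝ) + β) ∈ Set.Ici (2 : ℝ) :=
      le_trans h2 hle
    have hΓmono : Real.Gamma (α * (m + 1) + β)
        ≤ Real.Gamma (α * (↑(j + (m + 1)) : ℝ) + β) :=
      Real.Gamma_strictMonoOn_Ici.monotoneOn hmem₁ hmem₂ hle
    have hΓinv : (Real.Gamma (α * (↑(j + (m + 1)) : ℝ) + β))⁻¹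
        ≤ (Real.Gamma (α * (m + 1) + β))⁻¹ := by
      apply inv_anti₀ (hΓpos _ (lt_of_lt_of_le (by norm_num) h2)) hΓmono
    have hApow : nrm (A ^ (j + (m + 1))) ≤ nrm A ^ j * nrm (A ^ (m + 1)) := by
      rw [pow_add]
      calc nrm (A ^ j * A ^ (m + 1)) ≤ nrm (A ^ j) * nrm (A ^ (m + 1)) := hnrm_mul _ _
        _ ≤ nrm A ^ j * nrm (A ^ (m + 1)) :=
          mul_le_mul_of_nonneg_right (hpow j) (hnrm_nonneg _)
    have h1 : nrm (f (j + (m + 1)))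
        = (Real.Gamma (α * (↑(j + (m + 1)) : ℝ) + β))⁻¹ * nrm (A ^ (j + (m + 1))) := by
      rw [hfdef]
      simp only []
      rw [hnrm_rsmul, abs_of_nonneg (inv_nonneg.mpr (hΓk _).le)]
    rw [h1]
    calc (Real.Gamma (α * (↑(j + (m + 1)) : ℝ) + β))⁻¹ * nrm (A ^ (j + (m + 1)))
        ≤ (Real.Gamma (α * (m + 1) + β))⁻¹ * (nrm A ^ j * nrm (A ^ (m + 1))) :=
          mul_le_mul hΓinv hApow (hnrm_nonneg _)
            (inv_nonneg.mpr (hΓpos _ (lt_of_lt_of_le two_pos h2)).le)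
      _ = (nrm (A ^ (m + 1)) / Real.Gamma (α * (m + 1) + β)) * nrm A ^ j := by
          ring
      _ ≤ μ * nrm A ^ j :=
          mul_le_mul_of_nonneg_right hAm (pow_nonneg hr0 j)
  -- summability of the norms
  have hsub : Summable (fun j : ℕ => μ * nrm A ^ j) :=
    (summable_geometric_of_lt_one hr0 hA).mul_left μ
  have hnorm_shift : Summable (fun j : ℕ => nrm (f (j + (m + 1)))) :=
    Summable.of_nonneg_of_le (fun j => hnrm_nonneg _) hterm hsub
  have hnorm : Summable (fun k : ℕ => nrm (f k)) :=
    (summable_nat_add_iff (m + 1)).mp hnorm_shift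
  -- set up the normed space structure on the copy
  letI instAG : AddCommGroup (MCopy n) :=
    inferInstanceAs (AddCommGroup (Matrix (Fin n) (Fin n) ℂ))
  letI instMod : Module ℂ (MCopy n) :=
    inferInstanceAs (Module ℂ (Matrix (Fin n) (Fin n) ℂ))
  letI instN : NormedAddCommGroup (MCopy n) :=
    AddGroupNorm.toNormedAddCommGroup
      { toFun := fun X => nrm X
        map_zero' := (hnrm_def 0).mpr rfl
        add_le' := hnrm_add
        neg' := by
          intro X
          have : -X = (-1 : ℂ) • (X : Matrix (Fin n) (Fin n) ℂ) := by
            simp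
          show nrm (-X) = nrm X
          rw [this]
          exact (hnrm_smul (-1) X).trans (by simp)
        eq_zero_of_map_eq_zero' := fun X h => (hnrm_def X).mp h }
  letI instNS : NormedSpace ℂ (MCopy n) :=
    { norm_smul_le := fun c X => by
        show nrm (c • X) ≤ ‖c‖ * nrm X
        exact (hnrm_smul c X).le }
  letI e : MCopy n ≃ₗ[ℂ] Matrix (Fin n) (Fin n) ℂ :=
    { toFun := fun X => X
      invFun := fun X => X
      map_add' := fun _ _ => rfl
      map_smul' := fun _ _ => rfl
      left_inv := fun _ => rfl
      right_inv := fun _ => rfl }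
  letI instFD : FiniteDimensional ℂ (MCopy n) := e.symm.finiteDimensional
  letI : CompleteSpace (MCopy n) := FiniteDimensional.complete ℂ _
  letI eC : MCopy n ≃L[ℂ] Matrix (Fin n) (Fin n) ℂ := e.toContinuousLinearEquiv
  set fM : ℕ → MCopy n := fun k => f k with hfM
  have hFsum : Summable fM := by
    apply Summable.of_norm
    exact hnorm
  have hFsum_shift : Summable (fun j : ℕ => fM (j + (m + 1))) :=
    (summable_nat_add_iff (m + 1)).mpr hFsum
  -- identify ML with the tsum in the copy
  have h1 : ML α β A = eC (∑' k, fM k) := by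
    have := (eC.toContinuousLinearMap.map_tsum hFsum).symm
    exact this
  set S : Matrix (Fin n) (Fin n) ℂ :=
    ∑ k ∈ Finset.range (m + 1), (Real.Gamma (α * k + β))⁻¹ • A ^ k with hS
  have hSM : S = eC (∑ i ∈ Finset.range (m + 1), fM i) := by
    rw [map_sum]
    rfl
  have htail : (∑' k, fM k) - (∑ i ∈ Finset.range (m + 1), fM i)
      = ∑' i, fM (i + (m + 1)) :=
    (eq_sub_of_add_eq' (Summable.sum_add_tsum_nat_add (m + 1) hFsum)).symm
  have key : ML α β A - S = eC (∑' i, fM (i + (m + 1))) := by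
    rw [h1, hSM, ← map_sub, htail]
  rw [key]
  have hnrm_eC : nrm (eC (∑' i, fM (i + (m + 1)))) = ‖∑' i, fM (i + (m + 1))‖ := rfl
  rw [hnrm_eC]
  have hnorm_shift' : Summable (fun j : ℕ => ‖fM (j + (m + 1))‖) := hnorm_shift
  calc ‖∑' i, fM (i + (m + 1))‖ ≤ ∑' j, ‖fM (j + (m + 1))‖ :=
        norm_tsum_le_tsum_norm hnorm_shift'
    _ ≤ ∑' j, μ * nrm A ^ j := Summable.tsum_le_tsum hterm hnorm_shift' hsub
    _ = μ * ∑' j, nrm A ^ j := tsum_mul_left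
    _ = μ * (1 - nrm A)⁻¹ := by rw [tsum_geometric_of_lt_one hr0 hA]
    _ = μ / (1 - nrm A) := (div_eq_mul_inv _ _).symm
end

section
/- Let α, β > 0, let A be an n×n complex matrix, let m be a natural number and let a > 0 be such that Γ(αk+β) ≥ a^k for all integers k ≥ m. If b := ‖A‖/a < 1, where ‖·‖ is a submultiplicative matrix norm induced by a vector norm, then the Taylor truncation error satisfies R_m(A) := ‖E_{α,β}(A) − Σ_{k=0}^{m} A^k/Γ(αk+β)‖ ≤ b^{m+1}/(1−b). -/
open scoped Matrix

/-- Proposition 3: if `Γ(αk+β) ≥ a^k` for all `k ≥ m` and `b := ‖A‖/a < 1`, then the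
Taylor truncation error satisfies `R_m(A) ≤ b^{m+1}/(1−b)`, for any submultiplicative
matrix norm induced by a vector norm. -/
theorem taylor_truncation_error_le_geom {n : ℕ} (α β a : ℝ)
    (hα : 0 < α) (hβ : 0 < β) (ha : 0 < a)
    (nrm : Matrix (Fin n) (Fin n) ℂ → ℝ)
    (hnrm_nonneg : ∀ A, 0 ≤ nrm A)
    (hnrm_def : ∀ A, nrm A = 0 ↔ A = 0)
    (hnrm_add : ∀ A B, nrm (A + B) ≤ nrm A + nrm B)
    (hnrm_smul : ∀ (c : ℂ) A, nrm (c • A) = ‖c‖ * nrm A)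
    (hnrm_mul : ∀ A B, nrm (A * B) ≤ nrm A * nrm B)
    (hnrm_one : nrm 1 = 1)
    (A : Matrix (Fin n) (Fin n) ℂ) (m : ℕ)
    (hΓ : ∀ k : ℕ, m ≤ k → a ^ k ≤ Real.Gamma (α * k + β))
    (b : ℝ) (hb : b = nrm A / a) (hb1 : b < 1) :
    nrm (ML α β A - ∑ k ∈ Finset.range (m + 1), (Real.Gamma (α * k + β))⁻¹ • A ^ k)
      ≤ b ^ (m + 1) / (1 - b) := by
  classical
  set N := m + 1 with hN
  set g : ℕ → Matrix (Fin n) (Fin n) ℂ :=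
    fun k => (Real.Gamma (α * k + β))⁻¹ • A ^ k with hgdef
  have hML : ML α β A = ∑' k : ℕ, g k := rfl
  have hnrm_zero : nrm 0 = 0 := (hnrm_def 0).2 rfl
  have hsmul_real : ∀ (r : ℝ) (X : Matrix (Fin n) (Fin n) ℂ), nrm (r • X) = |r| * nrm X := by
    intro r X
    have h : r • X = ((r : ℂ)) • X := by
      ext i j; simp [Matrix.smul_apply, Complex.real_smul]
    rw [h, hnrm_smul, Complex.norm_real, Real.norm_eq_abs]
  have hsum_le : ∀ {ι : Type} (s : Finset ι) (f : ι → Matrix (Fin n) (Fin n) ℂ),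
      nrm (∑ i ∈ s, f i) ≤ ∑ i ∈ s, nrm (f i) := by
    intro ι s f
    induction s using Finset.induction with
    | empty => simp [hnrm_zero]
    | insert x s hx ih =>
      rw [Finset.sum_insert hx, Finset.sum_insert hx]
      exact (hnrm_add _ _).trans (by linarith)
  have hpow : ∀ k, nrm (A ^ k) ≤ nrm A ^ k := by
    intro k
    induction k with
    | zero => simp [hnrm_one]
    | succ k ih =>
      rw [pow_succ, pow_succ]
      exact (hnrm_mul _ _).trans (mul_le_mul_of_nonneg_right ih (hnrm_nonneg A))
  have hb0 : 0 ≤ b := hb ▸ div_nonneg (hnrm_nonneg A) ha.le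
  -- tail norm bound
  have hg_le : ∀ k, m ≤ k → nrm (g k) ≤ b ^ k := by
    intro k hk
    have hΓpos : (0:ℝ) < Real.Gamma (α * k + β) := lt_of_lt_of_le (pow_pos ha k) (hΓ k hk)
    have hinv : (Real.Gamma (α * k + β))⁻¹ ≤ (a ^ k)⁻¹ :=
      inv_anti₀ (pow_pos ha k) (hΓ k hk)
    have h1 : nrm (g k) = (Real.Gamma (α * k + β))⁻¹ * nrm (A ^ k) := by
      rw [hgdef]; simp only []
      rw [hsmul_real, abs_of_nonneg (inv_nonneg.2 hΓpos.le)]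
    rw [h1, hb, div_pow]
    calc (Real.Gamma (α * k + β))⁻¹ * nrm (A ^ k)
        ≤ (a ^ k)⁻¹ * nrm A ^ k :=
          mul_le_mul hinv (hpow k) (hnrm_nonneg _) (inv_nonneg.2 (pow_pos ha k).le)
      _ = nrm A ^ k / a ^ k := by rw [inv_mul_eq_div]
  -- entry extraction
  set E : Fin n → Fin n → Matrix (Fin n) (Fin n) ℂ :=
    fun i j => Matrix.single i j (1:ℂ) with hEdef
  have hEne : ∀ i j, E i j ≠ 0 := by
    intro i j h
    have := congrFun (congrFun h i) j
    simp [hEdef, Matrix.single] at this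
  have hEpos : ∀ i j, 0 < nrm (E i j) := fun i j =>
    lt_of_le_of_ne (hnrm_nonneg _) (fun h => hEne i j ((hnrm_def _).1 h.symm))
  have hkey : ∀ (X : Matrix (Fin n) (Fin n) ℂ) i j,
      E i i * X * E j j = (X i j) • E i j := by
    intro X i j
    ext a c
    simp [hEdef, Matrix.mul_apply, Matrix.single, Finset.sum_ite_eq, ite_and]
    aesop
  have habs : ∀ (X : Matrix (Fin n) (Fin n) ℂ) i j,
      ‖X i j‖ ≤ (nrm (E i i) * nrm (E j j) / nrm (E i j)) * nrm X := by
    intro X i j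
    have h1 : ‖X i j‖ * nrm (E i j) ≤ nrm (E i i) * nrm X * nrm (E j j) := by
      rw [← hnrm_smul, ← hkey X i j]
      exact (hnrm_mul _ _).trans (mul_le_mul_of_nonneg_right (hnrm_mul _ _) (hnrm_nonneg _))
    rw [div_mul_eq_mul_div, le_div_iff₀ (hEpos i j)]
    nlinarith [hEpos i j, hnrm_nonneg X]
  -- summability of g
  have hbsum : Summable (fun k : ℕ => b ^ k) := summable_geometric_of_lt_one hb0 hb1
  have hgsum : Summable g := by
    apply Pi.summable.2; intro i; apply Pi.summable.2; intro j
    apply Summable.of_norm_bounded_eventually_nat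
      (g := fun k => (nrm (E i i) * nrm (E j j) / nrm (E i j)) * b ^ k) (hbsum.mul_left _)
    filter_upwards [Filter.eventually_ge_atTop m] with k hk
    calc ‖g k i j‖ = ‖g k i j‖ := rfl
      _ ≤ (nrm (E i i) * nrm (E j j) / nrm (E i j)) * nrm (g k) := habs (g k) i j
      _ ≤ (nrm (E i i) * nrm (E j j) / nrm (E i j)) * b ^ k := by
          apply mul_le_mul_of_nonneg_left (hg_le k hk)
          exact div_nonneg (mul_nonneg (hnrm_nonneg _) (hnrm_nonneg _)) (hnrm_nonneg _)
  -- continuity of nrm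
  set C₁ : ℝ := ∑ i : Fin n, ∑ j : Fin n, nrm (E i j) with hC₁def
  have hC₁nonneg : 0 ≤ C₁ :=
    Finset.sum_nonneg fun i _ => Finset.sum_nonneg fun j _ => hnrm_nonneg _
  have hdecomp : ∀ X : Matrix (Fin n) (Fin n) ℂ,
      nrm X ≤ ∑ i : Fin n, ∑ j : Fin n, ‖X i j‖ * nrm (E i j) := by
    intro X
    have h0 : X = ∑ i : Fin n, ∑ j : Fin n, (X i j) • E i j := by
      conv_lhs => rw [Matrix.matrix_eq_sum_single X]
      refine Finset.sum_congr rfl fun i _ => Finset.sum_congr rfl fun j _ => ?_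
      rw [hEdef]; rw [Matrix.smul_single]; simp
    calc nrm X = nrm (∑ i : Fin n, ∑ j : Fin n, (X i j) • E i j) := by rw [← h0]
      _ ≤ ∑ i : Fin n, nrm (∑ j : Fin n, (X i j) • E i j) := hsum_le _ _
      _ ≤ ∑ i : Fin n, ∑ j : Fin n, nrm ((X i j) • E i j) :=
          Finset.sum_le_sum fun i _ => hsum_le _ _
      _ = ∑ i : Fin n, ∑ j : Fin n, ‖X i j‖ * nrm (E i j) := by
          refine Finset.sum_congr rfl fun i _ => Finset.sum_congr rfl fun j _ => ?_
          rw [hnrm_smul]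
  have habs_sub : ∀ X Y : Matrix (Fin n) (Fin n) ℂ, |nrm X - nrm Y| ≤ nrm (X - Y) := by
    intro X Y
    rw [abs_sub_le_iff]
    have hXY : nrm X - nrm Y ≤ nrm (X - Y) := by
      have := hnrm_add Y (X - Y)
      simp only [add_sub_cancel] at this
      linarith
    have hYX : nrm Y - nrm X ≤ nrm (X - Y) := by
      have h2 : nrm (Y - X) = nrm (X - Y) := by
        have h3 : Y - X = ((-1 : ℂ)) • (X - Y) := by simp
        rw [h3, hnrm_smul]; simp
      have := hnrm_add X (Y - X)
      simp only [add_sub_cancel] at this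
      linarith
    exact ⟨hXY, hYX⟩
  have hDcont : Continuous (fun Z : Matrix (Fin n) (Fin n) ℂ =>
      ∑ i : Fin n, ∑ j : Fin n, ‖Z i j‖ * nrm (E i j)) := by
    refine continuous_finset_sum _ fun i _ => continuous_finset_sum _ fun j _ => ?_
    exact ((continuous_norm.comp (continuous_id.matrix_elem i j)).mul continuous_const)
  -- split off the tail
  have hgsum' : Summable (fun k => g (k + N)) := (summable_nat_add_iff N).2 hgsum
  have hsplit : ML α β A - ∑ k ∈ Finset.range N, g k = ∑' k, g (k + N) := by
    rw [hML]
    exact (eq_sub_of_add_eq' (hgsum.sum_add_tsum_nat_add N)).symm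
  rw [hsplit]
  have hbsum' : Summable (fun k : ℕ => b ^ (k + N)) := (summable_nat_add_iff N).2 hbsum
  have htail : nrm (∑' k, g (k + N)) ≤ ∑' k : ℕ, b ^ (k + N) := by
    have hT := hgsum'.hasSum.tendsto_sum_nat
    have hT2 : Filter.Tendsto (fun M => nrm (∑ k ∈ Finset.range M, g (k + N)))
        Filter.atTop (nhds (nrm (∑' k, g (k + N)))) := by
      rw [tendsto_iff_dist_tendsto_zero]
      apply squeeze_zero (fun M => dist_nonneg)
        (g := fun M => ∑ i : Fin n, ∑ j : Fin n,
          ‖(((∑ k ∈ Finset.range M, g (k + N)) - ∑' k, g (k + N)) i j)‖ * nrm (E i j))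
      · intro M
        rw [Real.dist_eq]
        exact (habs_sub _ _).trans (hdecomp _)
      · have h0 : Filter.Tendsto
            (fun M => (∑ k ∈ Finset.range M, g (k + N)) - ∑' k, g (k + N))
            Filter.atTop (nhds 0) := by
          simpa using hT.sub (tendsto_const_nhds (x := ∑' k, g (k + N)))
        have h1 := (hDcont.tendsto 0).comp h0
        simpa [Function.comp_def] using h1
    apply le_of_tendsto hT2
    filter_upwards with M
    calc nrm (∑ k ∈ Finset.range M, g (k + N)) ≤ ∑ k ∈ Finset.range M, nrm (g (k + N)) :=
        hsum_le _ _
      _ ≤ ∑ k ∈ Finset.range M, b ^ (k + N) :=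
          Finset.sum_le_sum fun k _ => hg_le (k + N) (le_trans (Nat.le_succ m) (Nat.le_add_left N k))
      _ ≤ ∑' k : ℕ, b ^ (k + N) := hbsum'.sum_le_tsum _ (fun k _ => pow_nonneg hb0 _)
  have hpows : (fun k : ℕ => b ^ (k + N)) = fun k : ℕ => b ^ k * b ^ N := by
    funext k; rw [pow_add]
  have hgeom : ∑' k : ℕ, b ^ (k + N) = b ^ N / (1 - b) := by
    rw [hpows, tsum_mul_right, tsum_geometric_of_lt_one hb0 hb1]
    ring
  exact htail.trans (le_of_eq hgeom)
end

section
/- Let T be an n×n complex upper triangular matrix, write T = D + N where D = diag(λ_1,…,λ_n) is its diagonal and N is its strictly upper triangular part, and let z_0 = trace(T)/n. Let d = max{ |λ_i − z_0| : 1 ≤ i ≤ n } and let δ, r be real numbers with r > δ > d. Then for every t ∈ [0, 2π] and every integer k ≥ 1, the matrix (z_0 + r e^{it})I − T is invertible and ‖((z_0 + r e^{it})I − T)^{−k}‖_F ≤ c · ‖(I − |N|)^{−1}‖_F, where c := max{ ((k+j−1)!/(j!(k−1)!)) · (r−δ)^{−k−j} : j = 0, 1, …, n−1 } and |N| denotes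 the matrix whose entries are the absolute values of the entries of N. -/
open scoped Matrix
open Real

/-- The Frobenius norm of a complex matrix. -/
noncomputable def frobNorm {n : ℕ} (M : Matrix (Fin n) (Fin n) ℂ) : ℝ :=
  Real.sqrt (∑ i, ∑ j, ‖M i j‖ ^ 2)

section Aux

private lemma geom_one_sub {R : Type*} [Ring R] (X : R) (m : ℕ) :
    (1 - X) * ∑ j ∈ Finset.range m, X ^ j = 1 - X ^ m := by
  induction m with
  | zero => simp
  | succ m ih =>
      rw [Finset.sum_range_succ, mul_add, ih, sub_mul, one_mul, ← pow_succ']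
      abel

private lemma strict_pow_zero {R : Type*} [Ring R] {n : ℕ} (A : Matrix (Fin n) (Fin n) R)
    (h : ∀ i j : Fin n, (j : ℕ) ≤ i → A i j = 0) (m : ℕ) (i j : Fin n)
    (hm : (j : ℕ) < i + m) : (A ^ m) i j = 0 := by
  induction m generalizing j with
  | zero =>
      rw [pow_zero]
      exact Matrix.one_apply_ne (fun he => by subst he; omega)
  | succ m ih =>
      rw [pow_succ, Matrix.mul_apply]
      refine Finset.sum_eq_zero fun l _ => ?_
      by_cases hl : (j : ℕ) ≤ l
      · rw [h l j hl, mul_zero]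
      · rw [ih l (by omega), zero_mul]

private lemma abs_mul_entry {n : ℕ} {A C : Matrix (Fin n) (Fin n) ℂ}
    {A' C' : Matrix (Fin n) (Fin n) ℝ}
    (hA : ∀ i j, ‖A i j‖ ≤ A' i j) (hC : ∀ i j, ‖C i j‖ ≤ C' i j)
    (i j : Fin n) : ‖(A * C) i j‖ ≤ (A' * C') i j := by
  rw [Matrix.mul_apply, Matrix.mul_apply]
  refine le_trans (norm_sum_le _ _) (Finset.sum_le_sum fun l _ => ?_)
  rw [norm_mul]
  exact mul_le_mul (hA i l) (hC l j) (norm_nonneg _)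
    ((norm_nonneg _).trans (hA i l))

private lemma abs_pow_entry {n : ℕ} {A : Matrix (Fin n) (Fin n) ℂ}
    {A' : Matrix (Fin n) (Fin n) ℝ}
    (hA : ∀ i j, ‖A i j‖ ≤ A' i j) (k : ℕ)
    (i j : Fin n) : ‖(A ^ k) i j‖ ≤ (A' ^ k) i j := by
  induction k generalizing i j with
  | zero =>
      rw [pow_zero, pow_zero, Matrix.one_apply, Matrix.one_apply]
      split <;> simp
  | succ k ih =>
      rw [pow_succ, pow_succ]
      exact abs_mul_entry ih hA i j

private lemma pow_entry_nonneg {n : ℕ} {A : Matrix (Fin n) (Fin n) ℝ}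
    (hA : ∀ i j, 0 ≤ A i j) (k : ℕ) (i j : Fin n) : 0 ≤ (A ^ k) i j := by
  induction k generalizing i j with
  | zero =>
      rw [pow_zero, Matrix.one_apply]
      split <;> norm_num
  | succ k ih =>
      rw [pow_succ, Matrix.mul_apply]
      exact Finset.sum_nonneg fun l _ => mul_nonneg (ih i l) (hA l j)

private lemma triangle_sum {n : ℕ} (g : ℕ → ℕ → ℝ) (h0 : ∀ s j, n ≤ s + j → g s j = 0) :
    ∑ s ∈ Finset.range n, ∑ j ∈ Finset.range n, g s j
      = ∑ u ∈ Finset.range n, ∑ s ∈ Finset.range (u + 1), g s (u - s) := by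
  have h1 : ∀ u, ∑ s ∈ Finset.range (u + 1), g s (u - s)
      = ∑ ij ∈ Finset.HasAntidiagonal.antidiagonal u, g ij.1 ij.2 := fun u =>
    (Finset.Nat.sum_antidiagonal_eq_sum_range_succ_mk (fun ij : ℕ × ℕ => g ij.1 ij.2) u).symm
  simp only [h1]
  rw [← Finset.sum_biUnion]
  · rw [← Finset.sum_product']
    symm
    refine Finset.sum_subset ?_ ?_
    · intro ij hij
      rw [Finset.mem_biUnion] at hij
      obtain ⟨u, hu, hiju⟩ := hij
      rw [Finset.HasAntidiagonal.mem_antidiagonal] at hiju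
      rw [Finset.mem_range] at hu
      rw [Finset.mem_product, Finset.mem_range, Finset.mem_range]
      omega
    · intro ij _ hij
      apply h0
      by_contra hc
      push_neg at hc
      exact hij (Finset.mem_biUnion.mpr ⟨ij.1 + ij.2, Finset.mem_range.mpr hc,
        Finset.HasAntidiagonal.mem_antidiagonal.mpr rfl⟩)
  · intro u _ v _ huv
    apply Finset.disjoint_left.mpr
    intro ij hu hv
    rw [Finset.HasAntidiagonal.mem_antidiagonal] at hu hv
    exact huv (hu ▸ hv)

end Aux
/-- Bound on the Frobenius norm of powers of the resolvent of an upper triangular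
matrix along a circle of radius `r > δ > d` centered at `z₀ = trace T / n`. -/
theorem resolvent_pow_frobNorm_le {n : ℕ} (hn : 0 < n)
    (T : Matrix (Fin n) (Fin n) ℂ)
    (hT : T.BlockTriangular (id : Fin n → Fin n))
    (N : Matrix (Fin n) (Fin n) ℂ)
    (hN : N = T - Matrix.diagonal (fun i => T i i))
    (z₀ : ℂ) (hz₀ : z₀ = Matrix.trace T / n)
    (d δ r : ℝ)
    (hd : d = Finset.univ.sup' ⟨⟨0, hn⟩, Finset.mem_univ _⟩
      (fun i : Fin n => ‖T i i - z₀‖))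
    (hδd : d < δ) (hrδ : δ < r) :
    ∀ t ∈ Set.Icc (0 : ℝ) (2 * π), ∀ k : ℕ, 1 ≤ k →
      IsUnit ((z₀ + r * Complex.exp (t * Complex.I)) • (1 : Matrix (Fin n) (Fin n) ℂ) - T) ∧
      frobNorm ((((z₀ + r * Complex.exp (t * Complex.I)) •
            (1 : Matrix (Fin n) (Fin n) ℂ) - T)⁻¹) ^ k) ≤
        ((Finset.range n).sup' ⟨0, Finset.mem_range.mpr hn⟩
            (fun j : ℕ => ((k + j - 1).factorial : ℝ) /
              ((j.factorial : ℝ) * ((k - 1).factorial : ℝ)) * (r - δ) ^ (-(k : ℤ) - j))) *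
          frobNorm ((1 - N.map (fun x => ((‖x‖ : ℝ) : ℂ)))⁻¹) := by
  intro t _ k hk
  obtain ⟨m, rfl⟩ : ∃ m, k = m + 1 := ⟨k - 1, by omega⟩
  set z : ℂ := z₀ + r * Complex.exp (t * Complex.I) with hz
  set M : Matrix (Fin n) (Fin n) ℂ := z • 1 - T with hMdef
  -- basic positivity facts
  have hd0 : 0 ≤ d := by
    rw [hd]
    exact le_trans (norm_nonneg _)
      (Finset.le_sup' (fun i : Fin n => ‖T i i - z₀‖) (Finset.mem_univ (⟨0, hn⟩ : Fin n)))
  have hrδ0 : 0 < r - δ := by linarith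
  have hr0 : 0 ≤ r := by linarith
  set x : ℝ := (r - δ)⁻¹ with hxdef
  have hx0 : 0 < x := inv_pos.mpr hrδ0
  -- distance from z to the eigenvalues
  have habs_z : ‖z - z₀‖ = r := by
    have : z - z₀ = (r : ℂ) * Complex.exp (t * Complex.I) := by rw [hz]; ring
    rw [this, norm_mul, Complex.norm_exp]
    simp [Complex.norm_of_nonneg hr0, hr0]
  have hres : ∀ i : Fin n, r - δ < ‖z - T i i‖ := by
    intro i
    have h1 : ‖T i i - z₀‖ ≤ d := by
      rw [hd]; exact Finset.le_sup' (fun i : Fin n => ‖T i i - z₀‖) (Finset.mem_univ i)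
    have h2 : ‖z - z₀‖ ≤ ‖z - T i i‖ + ‖T i i - z₀‖ := by
      have : z - z₀ = (z - T i i) + (T i i - z₀) := by ring
      rw [this]; exact norm_add_le _ _
    rw [habs_z] at h2
    linarith
  have hznz : ∀ i : Fin n, z - T i i ≠ 0 := by
    intro i h
    have := hres i
    rw [h, norm_zero] at this
    linarith
  -- strict upper triangularity of N
  have hNe : ∀ i j : Fin n, (j : ℕ) ≤ i → N i j = 0 := by
    intro i j hji
    by_cases hij : i = j
    · subst hij; simp [hN]
    · have hlt : (j : ℕ) < i := lt_of_le_of_ne hji (fun h => hij (Fin.ext h.symm))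
      have hTij : T i j = 0 := hT (show (id j : Fin n) < id i from hlt)
      simp [hN, hTij, Matrix.diagonal_apply_ne _ hij]
  set B : Matrix (Fin n) (Fin n) ℝ := Matrix.of (fun i j => ‖N i j‖) with hBdef
  have hB0 : ∀ i j, 0 ≤ B i j := fun i j => norm_nonneg (N i j)
  have hBe : ∀ i j : Fin n, (j : ℕ) ≤ i → B i j = 0 := by
    intro i j hji
    show ‖N i j‖ = 0
    rw [hNe i j hji, norm_zero]
  have hBn : B ^ n = 0 := by
    ext i j
    rw [Matrix.zero_apply]
    exact strict_pow_zero B hBe n i j (by omega)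
  have hBu : ∀ u, n ≤ u → B ^ u = 0 := by
    intro u hu
    rw [show u = n + (u - n) by omega, pow_add, hBn, zero_mul]
  -- decomposition of M and its inverse
  set D' : Matrix (Fin n) (Fin n) ℂ := Matrix.diagonal (fun i => z - T i i) with hD'def
  set R : Matrix (Fin n) (Fin n) ℂ := Matrix.diagonal (fun i => (z - T i i)⁻¹) with hRdef
  have hM_eq : M = D' - N := by
    rw [hMdef, hN, hD'def, Matrix.smul_one_eq_diagonal]
    have : (Matrix.diagonal fun i => z - T i i)
        = Matrix.diagonal (fun _ => z) - Matrix.diagonal (fun i => T i i) := by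
      rw [Matrix.diagonal_sub]
    rw [this]
    abel
  have hD'R : D' * R = 1 := by
    rw [hD'def, hRdef, Matrix.diagonal_mul_diagonal]
    have : (fun i => (z - T i i) * (z - T i i)⁻¹) = fun _ : Fin n => (1 : ℂ) :=
      funext fun i => mul_inv_cancel₀ (hznz i)
    rw [this, Matrix.diagonal_one]
  have hRNe : ∀ i j : Fin n, (j : ℕ) ≤ i → (R * N) i j = 0 := by
    intro i j hji
    rw [hRdef, Matrix.diagonal_mul, hNe i j hji, mul_zero]
  have hX : (R * N) ^ n = 0 := by
    ext i j
    rw [Matrix.zero_apply]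
    exact strict_pow_zero _ hRNe n i j (by omega)
  set S : Matrix (Fin n) (Fin n) ℂ := (∑ jj ∈ Finset.range n, (R * N) ^ jj) * R with hSdef
  have hMS : M * S = 1 := by
    have hfac : M = D' * (1 - R * N) := by
      rw [hM_eq, mul_sub, mul_one, ← Matrix.mul_assoc, hD'R, Matrix.one_mul]
    rw [hfac, hSdef, Matrix.mul_assoc, ← Matrix.mul_assoc (1 - R * N),
      geom_one_sub, hX, sub_zero, Matrix.one_mul, hD'R]
  have hUnit : IsUnit M := ⟨⟨M, S, hMS, mul_eq_one_comm.mp hMS⟩, rfl⟩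
  have hMinv : M⁻¹ = S := Matrix.inv_eq_right_inv hMS
  refine ⟨hUnit, ?_⟩
  -- entrywise bound on S
  set SB : Matrix (Fin n) (Fin n) ℝ := ∑ jj ∈ Finset.range n, x ^ (jj + 1) • B ^ jj with hSBdef
  have hSB0 : ∀ i j, 0 ≤ SB i j := by
    intro i j
    rw [hSBdef, Matrix.sum_apply]
    exact Finset.sum_nonneg fun l _ => by
      rw [Matrix.smul_apply, smul_eq_mul]
      exact mul_nonneg (pow_nonneg hx0.le _) (pow_entry_nonneg hB0 l i j)
  have hR : ∀ i j, ‖R i j‖ ≤ (x • (1 : Matrix (Fin n) (Fin n) ℝ)) i j := by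
    intro i j
    by_cases hij : i = j
    · subst hij
      rw [hRdef, Matrix.diagonal_apply_eq, Matrix.smul_apply, Matrix.one_apply_eq,
        smul_eq_mul, mul_one, norm_inv]
      rw [inv_le_comm₀ (norm_pos_iff.mpr (hznz i)) hx0, hxdef, inv_inv]
      exact (hres i).le
    · rw [hRdef, Matrix.diagonal_apply_ne _ hij, Matrix.smul_apply,
        Matrix.one_apply_ne hij, norm_zero, smul_eq_mul, mul_zero]
  have hRN : ∀ i j, ‖(R * N) i j‖ ≤ (x • B) i j := by
    intro i j
    rw [hRdef, Matrix.diagonal_mul, norm_mul, Matrix.smul_apply, smul_eq_mul, norm_inv]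
    refine mul_le_mul ?_ le_rfl (norm_nonneg _) hx0.le
    rw [inv_le_comm₀ (norm_pos_iff.mpr (hznz i)) hx0, hxdef, inv_inv]
    exact (hres i).le
  have hSbound : ∀ i j, ‖S i j‖ ≤ SB i j := by
    intro i j
    rw [hSdef, Finset.sum_mul, hSBdef, Matrix.sum_apply, Matrix.sum_apply]
    refine le_trans (norm_sum_le _ _) (Finset.sum_le_sum fun jj _ => ?_)
    refine le_trans (abs_mul_entry (abs_pow_entry hRN jj) hR i j) (le_of_eq ?_)
    rw [smul_pow, Matrix.smul_mul, Matrix.mul_smul, Matrix.mul_one, smul_smul,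
      ← pow_succ, Matrix.smul_apply]
  -- the combinatorial bound
  have hhockey : ∀ m' u : ℕ, ∑ s ∈ Finset.range (u + 1), ((m' + s).choose s : ℕ)
      = (m' + 1 + u).choose u := by
    intro m' u
    have h1 : ∀ s : ℕ, (m' + s).choose s = (s + m').choose m' := by
      intro s
      have h := Nat.choose_symm (Nat.le_add_right m' s)
      rw [Nat.add_sub_cancel_left] at h
      rw [h, Nat.add_comm m' s]
    simp only [h1]
    rw [Nat.sum_range_add_choose u m']
    have h2 := Nat.choose_symm (Nat.le_add_right (m' + 1) u)
    rw [Nat.add_sub_cancel_left] at h2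
    rw [h2]
    congr 1
    omega
  have hcomb : ∀ m' (i j : Fin n), (SB ^ (m' + 1)) i j
      ≤ ∑ s ∈ Finset.range n, (((m' + s).choose s : ℕ) : ℝ) * x ^ (m' + 1 + s) * (B ^ s) i j := by
    intro m'
    induction m' with
    | zero =>
        intro i j
        rw [pow_one, hSBdef, Matrix.sum_apply]
        refine le_of_eq (Finset.sum_congr rfl fun s _ => ?_)
        rw [Matrix.smul_apply, smul_eq_mul, Nat.zero_add, Nat.choose_self]
        rw [show (0 : ℕ) + 1 + s = s + 1 by omega]
        norm_num
    | succ m' ih =>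
        intro i j
        set Cm : Matrix (Fin n) (Fin n) ℝ :=
          ∑ s ∈ Finset.range n, ((((m' + s).choose s : ℕ) : ℝ) * x ^ (m' + 1 + s)) • B ^ s
          with hCm
        have hCme : ∀ i j : Fin n, Cm i j
            = ∑ s ∈ Finset.range n, (((m' + s).choose s : ℕ) : ℝ) * x ^ (m' + 1 + s) * (B ^ s) i j := by
          intro i j
          rw [hCm, Matrix.sum_apply]
          exact Finset.sum_congr rfl fun s _ => by rw [Matrix.smul_apply, smul_eq_mul]
        have step1 : (SB ^ (m' + 1 + 1)) i j ≤ (Cm * SB) i j := by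
          rw [pow_succ, Matrix.mul_apply, Matrix.mul_apply]
          refine Finset.sum_le_sum fun l _ => mul_le_mul_of_nonneg_right ?_ (hSB0 l j)
          exact (ih i l).trans (le_of_eq (hCme i l).symm)
        refine le_trans step1 (le_of_eq ?_)
        have expand : Cm * SB = ∑ s ∈ Finset.range n, ∑ jj ∈ Finset.range n,
            ((((m' + s).choose s : ℕ) : ℝ) * x ^ (m' + 1 + s) * x ^ (jj + 1)) • B ^ (s + jj) := by
          rw [hCm, hSBdef, Finset.sum_mul_sum]
          refine Finset.sum_congr rfl fun s _ => Finset.sum_congr rfl fun jj _ => ?_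
          rw [Matrix.smul_mul, Matrix.mul_smul, smul_smul, ← pow_add]
        have entry : (Cm * SB) i j = ∑ s ∈ Finset.range n, ∑ jj ∈ Finset.range n,
            (((m' + s).choose s : ℕ) : ℝ) * x ^ (m' + 1 + s) * x ^ (jj + 1) * (B ^ (s + jj)) i j := by
          rw [expand, Matrix.sum_apply]
          refine Finset.sum_congr rfl fun s _ => ?_
          rw [Matrix.sum_apply]
          exact Finset.sum_congr rfl fun jj _ => by rw [Matrix.smul_apply, smul_eq_mul]
        rw [entry, triangle_sum
          (fun s jj => (((m' + s).choose s : ℕ) : ℝ) * x ^ (m' + 1 + s) * x ^ (jj + 1)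
            * (B ^ (s + jj)) i j)
          (fun s jj h => by simp only [hBu _ h, Matrix.zero_apply, mul_zero])]
        refine Finset.sum_congr rfl fun u hu => ?_
        have hinner : ∀ s ∈ Finset.range (u + 1),
            (((m' + s).choose s : ℕ) : ℝ) * x ^ (m' + 1 + s) * x ^ (u - s + 1)
              * (B ^ (s + (u - s))) i j
            = (((m' + s).choose s : ℕ) : ℝ) * (x ^ (m' + 1 + 1 + u) * (B ^ u) i j) := by
          intro s hs
          rw [Finset.mem_range] at hs
          have h1 : s + (u - s) = u := by omega
          have h2 : x ^ (m' + 1 + s) * x ^ (u - s + 1) = x ^ (m' + 1 + 1 + u) := by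
            rw [← pow_add]
            congr 1
            omega
          rw [h1, mul_assoc ((((m' + s).choose s : ℕ) : ℝ)), h2,
            mul_assoc ((((m' + s).choose s : ℕ) : ℝ))]
        rw [Finset.sum_congr rfl hinner, ← Finset.sum_mul, ← Nat.cast_sum, hhockey m' u,
          ← mul_assoc]
  -- relating the coefficients to the sup'
  set c : ℝ := (Finset.range n).sup' ⟨0, Finset.mem_range.mpr hn⟩
      (fun j : ℕ => (((m + 1) + j - 1).factorial : ℝ) /
        ((j.factorial : ℝ) * (((m + 1) - 1).factorial : ℝ)) * (r - δ) ^ (-((m + 1 : ℕ) : ℤ) - j))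
    with hcdef
  have hfeq : ∀ s : ℕ, (((m + 1) + s - 1).factorial : ℝ) /
      ((s.factorial : ℝ) * (((m + 1) - 1).factorial : ℝ)) * (r - δ) ^ (-((m + 1 : ℕ) : ℤ) - s)
      = (((m + s).choose s : ℕ) : ℝ) * x ^ (m + 1 + s) := by
    intro s
    have h1 : m + 1 + s - 1 = m + s := by omega
    have h2 : m + 1 - 1 = m := by omega
    have h3 : (((m + s).choose s : ℕ) : ℝ) = ((m + s).factorial : ℝ) /
        ((s.factorial : ℝ) * ((m + s - s).factorial : ℝ)) :=
      Nat.cast_choose ℝ (by omega)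
    have h4 : m + s - s = m := by omega
    have h5 : ((r - δ) ^ (-((m + 1 : ℕ) : ℤ) - s)) = x ^ (m + 1 + s) := by
      have he : (-((m + 1 : ℕ) : ℤ) - s) = -((m + 1 + s : ℕ) : ℤ) := by push_cast; ring
      rw [he, zpow_neg, zpow_natCast, hxdef, ← inv_pow]
    rw [h1, h2, h5, h3, h4]
  have hcf : ∀ s ∈ Finset.range n, (((m + s).choose s : ℕ) : ℝ) * x ^ (m + 1 + s) ≤ c := by
    intro s hs
    rw [hcdef, ← hfeq s]
    exact Finset.le_sup' (fun j : ℕ => (((m + 1) + j - 1).factorial : ℝ) /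
      ((j.factorial : ℝ) * (((m + 1) - 1).factorial : ℝ)) * (r - δ) ^ (-((m + 1 : ℕ) : ℤ) - j)) hs
  have hc0 : 0 ≤ c := by
    refine le_trans ?_ (hcf 0 (Finset.mem_range.mpr hn))
    positivity
  -- entrywise bound with c
  set E : Matrix (Fin n) (Fin n) ℝ := ∑ s ∈ Finset.range n, B ^ s with hEdef
  have hE0 : ∀ i j, 0 ≤ E i j := by
    intro i j
    rw [hEdef, Matrix.sum_apply]
    exact Finset.sum_nonneg fun s _ => pow_entry_nonneg hB0 s i j
  have hfinal : ∀ i j, ‖(M⁻¹ ^ (m + 1)) i j‖ ≤ c * E i j := by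
    intro i j
    rw [hMinv]
    refine le_trans (abs_pow_entry hSbound (m + 1) i j) ?_
    refine le_trans (hcomb m i j) ?_
    rw [hEdef, Matrix.sum_apply, Finset.mul_sum]
    refine Finset.sum_le_sum fun s hs => ?_
    exact mul_le_mul_of_nonneg_right (hcf s hs) (pow_entry_nonneg hB0 s i j)
  -- the inverse of 1 - |N|
  have hEinv : (1 - N.map (fun x => ((‖x‖ : ℝ) : ℂ)))⁻¹ = E.map Complex.ofRealHom := by
    refine Matrix.inv_eq_right_inv ?_
    have hmap : N.map (fun x => ((‖x‖ : ℝ) : ℂ)) = B.map Complex.ofRealHom := rfl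
    have hone : (1 : Matrix (Fin n) (Fin n) ℂ)
        = (1 : Matrix (Fin n) (Fin n) ℝ).map Complex.ofRealHom :=
      (Matrix.map_one _ (map_zero _) (map_one _)).symm
    have hsub : (1 : Matrix (Fin n) (Fin n) ℂ) - B.map Complex.ofRealHom
        = ((1 : Matrix (Fin n) (Fin n) ℝ) - B).map Complex.ofRealHom := by
      rw [Matrix.map_sub _ (fun a b => map_sub _ a b), ← hone]
    rw [hmap, hsub, ← Matrix.map_mul]
    rw [hEdef, geom_one_sub, hBn, sub_zero, Matrix.map_one _ (map_zero _) (map_one _)]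
  -- Frobenius norm comparison
  rw [hEinv]
  have hfrobE : frobNorm (E.map Complex.ofRealHom) = Real.sqrt (∑ i, ∑ j, (E i j) ^ 2) := by
    rw [frobNorm]
    congr 1
    refine Finset.sum_congr rfl fun i _ => Finset.sum_congr rfl fun j _ => ?_
    rw [Matrix.map_apply, Complex.ofRealHom_eq_coe, Complex.norm_real, Real.norm_eq_abs,
      abs_of_nonneg (hE0 i j)]
  rw [hfrobE, frobNorm]
  have hsumle : ∑ i, ∑ j, ‖(M⁻¹ ^ (m + 1)) i j‖ ^ 2
      ≤ ∑ i, ∑ j, (c * E i j) ^ 2 := by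
    refine Finset.sum_le_sum fun i _ => Finset.sum_le_sum fun j _ => ?_
    exact pow_le_pow_left₀ (norm_nonneg _) (hfinal i j) 2
  refine le_trans (Real.sqrt_le_sqrt hsumle) (le_of_eq ?_)
  have : ∑ i, ∑ j, (c * E i j) ^ 2 = c ^ 2 * ∑ i, ∑ j, (E i j) ^ 2 := by
    simp only [mul_pow, Finset.mul_sum]
  rw [this, Real.sqrt_mul (sq_nonneg c), Real.sqrt_sq hc0]
end

section
/- Let α, β > 0 and let t₁₁, t₁₂, t₂₂ ∈ ℂ with t₁₁ ≠ t₂₂. Then the Mittag-Leffler function of the 2×2 upper triangular matrix T = [[t₁₁, t₁₂], [0, t₂₂]] is E_{α,β}(T) = [[f₁₁, f₁₂], [0, f₂₂]], where f₁₁ = E_{α,β}(t₁₁), f₂₂ = E_{α,β}(t₂₂) and f₁₂ = t₁₂ · (f₂₂ − f₁₁)/(t₂₂ − t₁₁). -/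
open scoped Matrix

/-- The scalar Mittag-Leffler function `E_{α,β}(z) = ∑_{k=0}^∞ z^k / Γ(αk+β)`. -/
noncomputable def MLc (α β : ℝ) (z : ℂ) : ℂ :=
  ∑' k : ℕ, z ^ k / (Real.Gamma (α * k + β) : ℂ)

/-- Key Gamma growth estimate from log-convexity. -/
lemma gamma_mul_rpow_le (α : ℝ) (hα : 0 < α) {y : ℝ} (hy : 2 ≤ y) :
    Real.Gamma y * (y - 1) ^ α ≤ Real.Gamma (y + α) := by
  have h1 : (0:ℝ) < y - 1 := by linarith
  have hy0 : (0:ℝ) < y := by linarith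
  have hyα : (0:ℝ) < y + α := by linarith
  have hslope := Real.convexOn_log_Gamma.slope_mono_adjacent
    (x := y - 1) (y := y) (z := y + α)
    (Set.mem_Ioi.mpr h1) (Set.mem_Ioi.mpr hyα) (by linarith) (by linarith)
  have hgam : Real.Gamma y = (y - 1) * Real.Gamma (y - 1) := by
    have := Real.Gamma_add_one (ne_of_gt h1)
    rw [show y - 1 + 1 = y by ring] at this
    exact this
  have hG1 : 0 < Real.Gamma (y - 1) := Real.Gamma_pos_of_pos h1
  have hGy : 0 < Real.Gamma y := Real.Gamma_pos_of_pos hy0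
  have hGyα : 0 < Real.Gamma (y + α) := Real.Gamma_pos_of_pos hyα
  have hlhs : (Real.log ∘ Real.Gamma) y - (Real.log ∘ Real.Gamma) (y - 1) = Real.log (y - 1) := by
    simp only [Function.comp_apply]
    rw [hgam, Real.log_mul (ne_of_gt h1) (ne_of_gt hG1)]
    ring
  rw [show y - (y - 1) = 1 by ring, show y + α - y = α by ring, hlhs, div_one] at hslope
  have hslope' := (le_div_iff₀ hα).mp hslope
  rw [mul_comm] at hslope'
  have hkey : Real.log (Real.Gamma y * (y - 1) ^ α) ≤ Real.log (Real.Gamma (y + α)) := by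
    rw [Real.log_mul (ne_of_gt hGy) (ne_of_gt (Real.rpow_pos_of_pos h1 α)),
      Real.log_rpow h1]
    simp only [Function.comp_apply] at hslope'
    linarith
  exact (Real.log_le_log_iff (by positivity) hGyα).mp hkey

lemma summable_ml (α β : ℝ) (hα : 0 < α) (hβ : 0 < β) (z : ℂ) :
    Summable (fun k : ℕ => ((Real.Gamma (α * k + β) : ℂ))⁻¹ * z ^ k) := by
  apply summable_of_ratio_norm_eventually_le (r := 1/2) (by norm_num)
  have htend : Filter.Tendsto (fun k : ℕ => α * k + β) Filter.atTop Filter.atTop := by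
    apply Filter.tendsto_atTop_add_const_right
    exact (tendsto_natCast_atTop_atTop (R := ℝ)).const_mul_atTop hα
  filter_upwards [htend.eventually_ge_atTop (2 + (2 * ‖z‖ + 1) ^ α⁻¹)] with n hn
  set y := α * n + β with hy
  have hB : (0:ℝ) ≤ (2 * ‖z‖ + 1) ^ α⁻¹ := Real.rpow_nonneg (by positivity) _
  have hy2 : 2 ≤ y := by linarith
  have h1 : (0:ℝ) < y - 1 := by linarith
  have hGy : 0 < Real.Gamma y := Real.Gamma_pos_of_pos (by linarith)
  have hGyα : 0 < Real.Gamma (y + α) := Real.Gamma_pos_of_pos (by linarith)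
  have hrpow : 2 * ‖z‖ + 1 ≤ (y - 1) ^ α := by
    calc 2 * ‖z‖ + 1 = ((2 * ‖z‖ + 1) ^ α⁻¹) ^ α :=
          (Real.rpow_inv_rpow (by positivity) (ne_of_gt hα)).symm
      _ ≤ (y - 1) ^ α := Real.rpow_le_rpow hB (by linarith) (le_of_lt hα)
  have hkey : (2 * ‖z‖) * Real.Gamma y ≤ Real.Gamma (y + α) := by
    calc (2 * ‖z‖) * Real.Gamma y ≤ (y - 1) ^ α * Real.Gamma y := by
          apply mul_le_mul_of_nonneg_right _ (le_of_lt hGy); linarith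
      _ = Real.Gamma y * (y - 1) ^ α := mul_comm _ _
      _ ≤ Real.Gamma (y + α) := gamma_mul_rpow_le α hα hy2
  have hstep : α * ((n + 1 : ℕ) : ℝ) + β = y + α := by push_cast; ring
  have hnorm : ∀ (w : ℝ) (m : ℕ), 0 < w → ‖((w:ℂ))⁻¹ * z ^ m‖ = w⁻¹ * ‖z‖ ^ m := by
    intro w m hw
    rw [norm_mul, norm_inv, norm_pow, Complex.norm_real, Real.norm_eq_abs, abs_of_pos hw]
  rw [hstep, hnorm _ _ hGyα, hnorm _ _ hGy, pow_succ]
  have hzn : (0:ℝ) ≤ ‖z‖ ^ n := by positivity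
  calc (Real.Gamma (y + α))⁻¹ * (‖z‖ ^ n * ‖z‖) = (‖z‖ ^ n * ‖z‖) / Real.Gamma (y + α) := by
        rw [div_eq_mul_inv]; ring
    _ ≤ ‖z‖ ^ n / (2 * Real.Gamma y) := by
        rw [div_le_div_iff₀ hGyα (by positivity)]
        nlinarith [mul_le_mul_of_nonneg_left hkey hzn]
    _ = 1 / 2 * ((Real.Gamma y)⁻¹ * ‖z‖ ^ n) := by
        rw [div_eq_mul_inv, div_eq_mul_inv, mul_inv]; ring

lemma hasSum_mlc (α β : ℝ) (hα : 0 < α) (hβ : 0 < β) (z : ℂ) :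
    HasSum (fun k : ℕ => ((Real.Gamma (α * k + β) : ℂ))⁻¹ * z ^ k) (MLc α β z) := by
  have h := (summable_ml α β hα hβ z).hasSum
  have : MLc α β z = ∑' k : ℕ, ((Real.Gamma (α * k + β) : ℂ))⁻¹ * z ^ k := by
    unfold MLc
    congr 1
    funext k
    rw [div_eq_mul_inv, mul_comm]
  rw [this]
  exact h

lemma pow_tri (a b c : ℂ) (h : c - a ≠ 0) (k : ℕ) :
    !![a, b; 0, c] ^ k = !![a ^ k, b * (c ^ k - a ^ k) / (c - a); 0, c ^ k] := by
  induction k with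
  | zero =>
      simp [Matrix.one_fin_two]
  | succ k ih =>
      rw [pow_succ, ih]
      ext i j
      fin_cases i <;> fin_cases j <;>
        simp [Matrix.mul_apply, Fin.sum_univ_two, pow_succ] <;> field_simp <;> ring

/-- The Mittag-Leffler function of a `2×2` upper triangular matrix with distinct
diagonal entries. -/
theorem mittagLeffler_two_by_two (α β : ℝ) (hα : 0 < α) (hβ : 0 < β)
    (t₁₁ t₁₂ t₂₂ : ℂ) (h : t₁₁ ≠ t₂₂) :
    ML α β !![t₁₁, t₁₂; 0, t₂₂] =
      !![MLc α β t₁₁, t₁₂ * (MLc α β t₂₂ - MLc α β t₁₁) / (t₂₂ - t₁₁);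
         0, MLc α β t₂₂] := by
  have hca : t₂₂ - t₁₁ ≠ 0 := sub_ne_zero.mpr (Ne.symm h)
  have ha := hasSum_mlc α β hα hβ t₁₁
  have hc := hasSum_mlc α β hα hβ t₂₂
  have hmat : HasSum (fun k : ℕ => (Real.Gamma (α * k + β))⁻¹ • !![t₁₁, t₁₂; 0, t₂₂] ^ k)
      !![MLc α β t₁₁, t₁₂ * (MLc α β t₂₂ - MLc α β t₁₁) / (t₂₂ - t₁₁);
         0, MLc α β t₂₂] := by
    have hfun : (fun k : ℕ => (Real.Gamma (α * k + β))⁻¹ • !![t₁₁, t₁₂; 0, t₂₂] ^ k)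
        = fun k : ℕ => (Real.Gamma (α * k + β))⁻¹ •
            !![t₁₁ ^ k, t₁₂ * (t₂₂ ^ k - t₁₁ ^ k) / (t₂₂ - t₁₁); 0, t₂₂ ^ k] :=
      funext fun k => by rw [pow_tri _ _ _ hca]
    rw [hfun]; apply Pi.hasSum.mpr
    intro i
    rw [Pi.hasSum]
    intro j
    fin_cases i <;> fin_cases j <;>
      simp only [Matrix.smul_apply, Matrix.cons_val', Matrix.cons_val_zero, Matrix.cons_val_one,
        Matrix.head_cons, Matrix.head_fin_const, Matrix.empty_val', Matrix.cons_val_fin_one,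
        Fin.isValue, Complex.real_smul, Complex.ofReal_inv, smul_zero, smul_eq_mul, mul_zero]
    · exact ha
    · have h01 := (hc.sub ha).mul_left (t₁₂ / (t₂₂ - t₁₁))
      have heq : (fun k : ℕ => t₁₂ / (t₂₂ - t₁₁) *
          (((Real.Gamma (α * k + β) : ℂ))⁻¹ * t₂₂ ^ k -
            ((Real.Gamma (α * k + β) : ℂ))⁻¹ * t₁₁ ^ k))
          = fun k : ℕ => ((Real.Gamma (α * k + β) : ℂ))⁻¹ *
              (t₁₂ * (t₂₂ ^ k - t₁₁ ^ k) / (t₂₂ - t₁₁)) := by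
        funext k; ring
      rw [heq] at h01
      have hval : t₁₂ / (t₂₂ - t₁₁) * (MLc α β t₂₂ - MLc α β t₁₁)
          = t₁₂ * (MLc α β t₂₂ - MLc α β t₁₁) / (t₂₂ - t₁₁) := by ring
      rw [hval] at h01
      exact h01
    · simpa using hasSum_zero
    · exact hc
  unfold ML
  exact hmat.tsum_eq
end
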